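/- For all 3PGQs p, q, r: ⟨pr, qr⟩ = N(r)·⟨p,q⟩. -/
import Mathlib


def qmul (l1 l2 l3 : ℝ) (p q : ℝ × ℝ × ℝ × ℝ) : ℝ × ℝ × ℝ × ℝ :=
  (p.1*q.1 - l1*l2*p.2.1*q.2.1 - l1*l3*p.2.2.1*q.2.2.1 - l2*l3*p.2.2.2*q.2.2.2,
   p.1*q.2.1 + p.2.1*q.1 + l3*(p.2.2.1*q.2.2.2 - p.2.2.2*q.2.2.1),
   p.1*q.2.2.1 + p.2.2.1*q.1 + l2*(p.2.2.2*q.2.1 - p.2.1*q.2.2.2),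
   p.1*q.2.2.2 + p.2.2.2*q.1 + l1*(p.2.1*q.2.2.1 - p.2.2.1*q.2.1))

def qnorm (l1 l2 l3 : ℝ) (p : ℝ × ℝ × ℝ × ℝ) : ℝ :=
  p.1^2 + l1*l2*p.2.1^2 + l1*l3*p.2.2.1^2 + l2*l3*p.2.2.2^2

def qinner (l1 l2 l3 : ℝ) (p q : ℝ × ℝ × ℝ × ℝ) : ℝ :=
  p.1*q.1 + l1*l2*p.2.1*q.2.1 + l1*l3*p.2.2.1*q.2.2.1 + l2*l3*p.2.2.2*q.2.2.2

theorem inner_mul_right (l1 l2 l3 : ℝ) (p q r : ℝ × ℝ × ℝ × ℝ) :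
    qinner l1 l2 l3 (qmul l1 l2 l3 p r) (qmul l1 l2 l3 q r) =
      qnorm l1 l2 l3 r * qinner l1 l2 l3 p q := by
  obtain ⟨a,b,c,d⟩ := p; obtain ⟨e,f,g,h⟩ := q; obtain ⟨x,y,z,w⟩ := r
  simp only [qinner, qmul, qnorm]; ring
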